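/- For positive integers t, r with r ≥ 3 and t + r − 3 ≥ k, the graph G(t, r − 2) is K_{1,r}-free and satisfies ι'_k(G(t, r−2)) = (r − 2)(ι_k(G(t, r−2)) − 1) + 1 = (r−2)(t−1) + 1, showing the bound ι'_k ≤ (r−2)(ι_k − 1) + 1 for K_{1,r}-free graphs is sharp. -/

import Mathlib

open SimpleGraph

variable {V : Type*}

/-- The closed neighborhood `N[S]` of a set of vertices. -/
def closedNbhd (G : SimpleGraph V) (S : Set V) : Set V :=
  {v | v ∈ S ∨ ∃ u ∈ S, G.Adj u v}

/-- The open neighborhood `N(S)` of a set of vertices. -/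
def openNbhd (G : SimpleGraph V) (S : Set V) : Set V :=
  {v | ∃ u ∈ S, G.Adj u v}

/-- A set is independent if no two of its vertices are adjacent. -/
def IsIndep (G : SimpleGraph V) (S : Set V) : Prop :=
  S.Pairwise fun u w => ¬ G.Adj u w

/-- `S` is `K_k`-isolating: `G - N[S]` contains no clique of size `k`. -/
def IsIsolating (G : SimpleGraph V) (k : ℕ) (S : Set V) : Prop :=
  ∀ T : Finset V, (↑T : Set V) ∩ closedNbhd G S = ∅ → G.IsClique ↑T → T.card ≠ k

/-- The `K_k`-isolation number `ι_k(G)`. -/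
noncomputable def iota [Fintype V] (G : SimpleGraph V) (k : ℕ) : ℕ :=
  sInf {n | ∃ S : Finset V, S.card = n ∧ IsIsolating G k ↑S}

/-- The independent `K_k`-isolation number `ι'_k(G)`. -/
noncomputable def iota' [Fintype V] (G : SimpleGraph V) (k : ℕ) : ℕ :=
  sInf {n | ∃ S : Finset V, S.card = n ∧ IsIsolating G k ↑S ∧ IsIndep G ↑S}

/-- A dominating set: every vertex lies in `N[S]`. -/
def IsDominating (G : SimpleGraph V) (S : Set V) : Prop :=
  ∀ v, v ∈ closedNbhd G S

/-- The domination number `γ(G)`. -/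
noncomputable def gammaNum [Fintype V] (G : SimpleGraph V) : ℕ :=
  sInf {n | ∃ S : Finset V, S.card = n ∧ IsDominating G ↑S}

/-- The independent domination number `i(G)`. -/
noncomputable def iNum [Fintype V] (G : SimpleGraph V) : ℕ :=
  sInf {n | ∃ S : Finset V, S.card = n ∧ IsDominating G ↑S ∧ IsIndep G ↑S}

/-- `G` is `K_{1,r}`-free: no induced subgraph isomorphic to the star `K_{1,r}`. -/
def K1rFree (G : SimpleGraph V) (r : ℕ) : Prop :=
  IsEmpty (completeBipartiteGraph (Fin 1) (Fin r) ↪g G)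

/-- Degree of `v` inside the vertex subset `T`. -/
def degIn [DecidableEq V] (G : SimpleGraph V) [DecidableRel G.Adj] (T : Finset V) (v : V) : ℕ :=
  (T.filter (G.Adj v)).card

/-- Vertices of `G(t,s)`: `inl i` is the clique vertex `xᵢ`; `inr (i, i', j)` is the `j`-th
vertex of the copy `K^{i,i'}_k`, with `y_{i,i'}` being the one with `j = 0`. -/
abbrev GtsVertex (t s k : ℕ) := Fin t ⊕ Fin t × Fin s × Fin k

/-- The graph `G(t,s)`: a clique on `x₁,…,x_t` and `s·t` disjoint copies of `K_k`, with
`xᵢ` joined to the vertex `y_{i,i'}` (index `0`) of each copy `K^{i,i'}_k`. -/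
def GraphGts (t s k : ℕ) : SimpleGraph (GtsVertex t s k) where
  Adj a b := match a, b with
    | Sum.inl i, Sum.inl j => i ≠ j
    | Sum.inl i, Sum.inr (a, _, c) => a = i ∧ (c : ℕ) = 0
    | Sum.inr (a, _, c), Sum.inl i => a = i ∧ (c : ℕ) = 0
    | Sum.inr (a, b, c), Sum.inr (a', b', c') => a = a' ∧ b = b' ∧ c ≠ c'
  symm := by
    constructor
    rintro (i | ⟨a, b, c⟩) (j | ⟨a', b', c'⟩) h
    · exact h.symm
    · exact h
    · exact h
    · exact ⟨h.1.symm, h.2.1.symm, h.2.2.symm⟩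
  loopless := by
    constructor
    rintro (i | ⟨a, b, c⟩) h
    · exact h rfl
    · exact h.2.2 rfl

instance (t s k : ℕ) : DecidableRel (GraphGts t s k).Adj := fun a b =>
  match a, b with
  | Sum.inl i, Sum.inl j => inferInstanceAs (Decidable (i ≠ j))
  | Sum.inl i, Sum.inr (a, _, c) => inferInstanceAs (Decidable (a = i ∧ (c : ℕ) = 0))
  | Sum.inr (a, _, c), Sum.inl i => inferInstanceAs (Decidable (a = i ∧ (c : ℕ) = 0))
  | Sum.inr (a, b, c), Sum.inr (a', b', c') =>
      inferInstanceAs (Decidable (a = a' ∧ b = b' ∧ c ≠ c'))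

section GtsAux

variable {t s k : ℕ}

/-- Any clique all of whose vertices are copy-vertices with nonzero index has size ≤ k-1. -/
lemma gts_clique_card (hk : 0 < k) (T : Finset (GtsVertex t s k))
    (hT : ∀ v ∈ T, ∃ a b c, v = Sum.inr (a, b, c) ∧ (c : ℕ) ≠ 0)
    (hcl : (GraphGts t s k).IsClique ↑T) : T.card ≠ k := by
  classical
  intro hcard
  have hmaps : ∀ v ∈ T, (fun v : GtsVertex t s k =>
      match v with
      | Sum.inl _ => (⟨0, hk⟩ : Fin k)
      | Sum.inr (_, _, c) => c) v ∈ Finset.univ.erase (⟨0, hk⟩ : Fin k) := by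
    intro v hv
    obtain ⟨a, b, c, rfl, hc⟩ := hT v hv
    refine Finset.mem_erase.2 ⟨?_, Finset.mem_univ _⟩
    intro hcontr
    exact hc (by simpa using congrArg Fin.val hcontr)
  have hinj : Set.InjOn (fun v : GtsVertex t s k =>
      match v with
      | Sum.inl _ => (⟨0, hk⟩ : Fin k)
      | Sum.inr (_, _, c) => c) ↑T := by
    intro u hu w hw hpw
    by_contra hne
    have hadj := hcl hu hw hne
    obtain ⟨a, b, c, hu', hc⟩ := hT u hu
    obtain ⟨a', b', c', hw', hc'⟩ := hT w hw
    subst hu' hw'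
    exact hadj.2.2 hpw
  have hle := Finset.card_le_card_of_injOn _ hmaps hinj
  rw [Finset.card_erase_of_mem (Finset.mem_univ _), Finset.card_univ, Fintype.card_fin] at hle
  omega

lemma gts_branch (hk : 0 < k) (S : Finset (GtsVertex t s k))
    (hS : IsIsolating (GraphGts t s k) k ↑S) (i : Fin t) (i' : Fin s) :
    Sum.inl i ∈ S ∨ ∃ j, Sum.inr (i, i', j) ∈ S := by
  classical
  by_contra hcon
  push_neg at hcon
  obtain ⟨hx, hy⟩ := hcon
  refine hS (Finset.univ.image fun j : Fin k => Sum.inr (i, i', j)) ?_ ?_ ?_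
  · rw [Set.eq_empty_iff_forall_notMem]
    rintro v ⟨hvT, hvN⟩
    rw [Finset.mem_coe, Finset.mem_image] at hvT
    obtain ⟨j, -, rfl⟩ := hvT
    rcases hvN with hvS | ⟨u, huS, hadj⟩
    · exact hy j hvS
    · rcases u with u | ⟨a, b, c⟩
      · obtain ⟨rfl, -⟩ := hadj
        exact hx huS
      · obtain ⟨rfl, rfl, -⟩ := hadj
        exact hy c huS
  · rintro u hu w hw hne
    rw [Finset.mem_coe, Finset.mem_image] at hu hw
    obtain ⟨j1, -, rfl⟩ := hu
    obtain ⟨j2, -, rfl⟩ := hw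
    exact ⟨rfl, rfl, fun hc => hne (by rw [hc])⟩
  · rw [Finset.card_image_of_injective _ (fun a b hab => by
      simpa using hab), Finset.card_univ, Fintype.card_fin]

lemma gts_card_lower (hs : 0 < s) (hk : 0 < k) (S : Finset (GtsVertex t s k))
    (hS : IsIsolating (GraphGts t s k) k ↑S) : t ≤ S.card := by
  classical
  have hch : ∀ i : Fin t, ∃ v, v ∈ S ∧ (v = Sum.inl i ∨ ∃ j, v = Sum.inr (i, ⟨0, hs⟩, j)) := by
    intro i
    rcases gts_branch hk S hS i ⟨0, hs⟩ with h | ⟨j, hj⟩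
    · exact ⟨Sum.inl i, h, Or.inl rfl⟩
    · exact ⟨Sum.inr (i, ⟨0, hs⟩, j), hj, Or.inr ⟨j, rfl⟩⟩
  choose f hfS hf using hch
  have hidx : ∀ i, (match f i with
      | Sum.inl a => a
      | Sum.inr (a, _, _) => a) = i := by
    intro i
    rcases hf i with h | ⟨j, h⟩ <;> rw [h]
  have hinj : Function.Injective f := by
    intro i1 i2 heq
    rw [← hidx i1, ← hidx i2, heq]
  calc t = (Finset.univ : Finset (Fin t)).card := by
        rw [Finset.card_univ, Fintype.card_fin]
    _ ≤ S.card := Finset.card_le_card_of_injOn f (fun i _ => hfS i) hinj.injOn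

lemma gts_card_lower' (ht : 0 < t) (hs : 0 < s) (hk : 0 < k) (S : Finset (GtsVertex t s k))
    (hS : IsIsolating (GraphGts t s k) k ↑S) (hind : IsIndep (GraphGts t s k) ↑S) :
    s * (t - 1) + 1 ≤ S.card := by
  classical
  set goodI : Finset (Fin t) := Finset.univ.filter (fun i => Sum.inl i ∈ S) with hgoodI
  set badI : Finset (Fin t) := Finset.univ.filter (fun i => Sum.inl i ∉ S) with hbadI
  have hsplit : goodI.card + badI.card = t := by
    rw [hgoodI, hbadI, Finset.card_filter_add_card_filter_not,
      Finset.card_univ, Fintype.card_fin]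
  have hgood1 : goodI.card ≤ 1 := by
    refine Finset.card_le_one.2 ?_
    intro a ha b hb
    by_contra hab
    have haS : Sum.inl a ∈ S := (Finset.mem_filter.1 ha).2
    have hbS : Sum.inl b ∈ S := (Finset.mem_filter.1 hb).2
    exact hind (Finset.mem_coe.2 haS) (Finset.mem_coe.2 hbS)
      (fun hc => hab (Sum.inl.inj hc)) hab
  have hch : ∀ p : Fin t × Fin s, ∃ j : Fin k,
      Sum.inl p.1 ∈ S ∨ Sum.inr (p.1, p.2, j) ∈ S := by
    intro p
    rcases gts_branch hk S hS p.1 p.2 with h | ⟨j, hj⟩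
    · exact ⟨⟨0, hk⟩, Or.inl h⟩
    · exact ⟨j, Or.inr hj⟩
  choose J hJ using hch
  set D : Finset (Fin t × Fin s) := badI ×ˢ Finset.univ with hD
  set F : Fin t × Fin s → GtsVertex t s k := fun p => Sum.inr (p.1, p.2, J p) with hF
  have hFimS : D.image F ⊆ S := by
    intro v hv
    rw [Finset.mem_image] at hv
    obtain ⟨p, hp, rfl⟩ := hv
    have hpb : Sum.inl p.1 ∉ S := (Finset.mem_filter.1 (Finset.mem_product.1 hp).1).2
    rcases hJ p with h | h
    · exact absurd h hpb
    · exact h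
  have hGimS : goodI.image Sum.inl ⊆ S := by
    intro v hv
    rw [Finset.mem_image] at hv
    obtain ⟨i, hi, rfl⟩ := hv
    exact (Finset.mem_filter.1 hi).2
  have hdisj : Disjoint (D.image F) (goodI.image Sum.inl) := by
    rw [Finset.disjoint_left]
    intro v hv hv'
    rw [Finset.mem_image] at hv hv'
    obtain ⟨p, -, rfl⟩ := hv
    obtain ⟨i, -, hcontr⟩ := hv'
    cases hcontr
  have hunion : (D.image F) ∪ (goodI.image Sum.inl) ⊆ S :=
    Finset.union_subset hFimS hGimS
  have hcards : (D.image F).card + (goodI.image (Sum.inl : Fin t → GtsVertex t s k)).card ≤ S.card := by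
    have h1 := Finset.card_union_of_disjoint hdisj
    rw [← h1]
    exact Finset.card_le_card hunion
  have hFcard : (D.image F).card = badI.card * s := by
    have hinj : Set.InjOn F ↑D := by
      intro p hp q hq hpq
      rw [hF] at hpq
      simp only [Sum.inr.injEq, Prod.mk.injEq] at hpq
      exact Prod.ext hpq.1 hpq.2.1
    rw [Finset.card_image_of_injOn hinj, hD, Finset.card_product, Finset.card_univ,
      Fintype.card_fin]
  have hGcard : (goodI.image (Sum.inl : Fin t → GtsVertex t s k)).card = goodI.card :=
    Finset.card_image_of_injective _ Sum.inl_injective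
  rw [hFcard, hGcard] at hcards
  have hb : badI.card = t - goodI.card := by omega
  rcases Nat.lt_or_ge goodI.card 1 with hg | hg
  · have hg0 : goodI.card = 0 := by omega
    rw [hg0] at hb
    rw [hb, Nat.sub_zero, hg0, add_zero] at hcards
    have h2 : s * (t - 1) + s = s * t := by
      rw [← Nat.mul_succ]
      congr 1
      omega
    calc s * (t - 1) + 1 ≤ s * (t - 1) + s := Nat.add_le_add_left hs _
      _ = s * t := h2
      _ = t * s := mul_comm s t
      _ ≤ S.card := hcards
  · have hg1 : goodI.card = 1 := by omega
    rw [hg1] at hb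
    rw [hb, hg1, mul_comm] at hcards
    exact hcards

lemma gts_iso_X (hk : 0 < k) :
    IsIsolating (GraphGts t s k) k ↑(Finset.univ.image (Sum.inl : Fin t → GtsVertex t s k)) := by
  classical
  intro T hdisj hcl
  have hnot : ∀ x ∈ T, x ∉ closedNbhd (GraphGts t s k)
      ↑(Finset.univ.image (Sum.inl : Fin t → GtsVertex t s k)) := by
    intro x hx hN
    exact (Set.eq_empty_iff_forall_notMem.1 hdisj x) ⟨Finset.mem_coe.2 hx, hN⟩
  refine gts_clique_card hk T ?_ hcl
  rintro (i | ⟨a, b, c⟩) hv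
  · exact absurd (Or.inl (by simp)) (hnot _ hv)
  · by_cases hc : (c : ℕ) = 0
    · exact absurd (Or.inr ⟨Sum.inl a, by simp, ⟨rfl, hc⟩⟩) (hnot _ hv)
    · exact ⟨a, b, c, rfl, hc⟩

lemma gts_iota_eq (ht : 0 < t) (hs : 0 < s) (hk : 0 < k) :
    iota (GraphGts t s k) k = t := by
  classical
  have hmem : t ∈ {n | ∃ S : Finset (GtsVertex t s k), S.card = n ∧
      IsIsolating (GraphGts t s k) k ↑S} := by
    refine ⟨Finset.univ.image Sum.inl, ?_, gts_iso_X hk⟩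
    rw [Finset.card_image_of_injective _ Sum.inl_injective, Finset.card_univ, Fintype.card_fin]
  refine le_antisymm (Nat.sInf_le hmem) ?_
  obtain ⟨S, hcard, hiso⟩ := Nat.sInf_mem ⟨t, hmem⟩
  rw [iota, ← hcard]
  exact gts_card_lower hs hk S hiso

lemma gts_iota'_eq (ht : 0 < t) (hs : 0 < s) (hk : 0 < k) :
    iota' (GraphGts t s k) k = s * (t - 1) + 1 := by
  classical
  set i0 : Fin t := ⟨0, ht⟩ with hi0
  set S' : Finset (GtsVertex t s k) := insert (Sum.inl i0)
    (((Finset.univ.erase i0) ×ˢ (Finset.univ : Finset (Fin s))).image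
      fun p => Sum.inr (p.1, p.2, (⟨0, hk⟩ : Fin k))) with hS'
  have hmemS' : ∀ v, v ∈ S' ↔ v = Sum.inl i0 ∨
      ∃ a b, a ≠ i0 ∧ v = Sum.inr (a, b, (⟨0, hk⟩ : Fin k)) := by
    intro v
    rw [hS', Finset.mem_insert, Finset.mem_image]
    constructor
    · rintro (h | ⟨p, hp, rfl⟩)
      · exact Or.inl h
      · exact Or.inr ⟨p.1, p.2, (Finset.mem_erase.1 (Finset.mem_product.1 hp).1).1, rfl⟩
    · rintro (h | ⟨a, b, ha, rfl⟩)
      · exact Or.inl h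
      · exact Or.inr ⟨(a, b), Finset.mem_product.2
          ⟨Finset.mem_erase.2 ⟨ha, Finset.mem_univ _⟩, Finset.mem_univ _⟩, rfl⟩
  have hiso : IsIsolating (GraphGts t s k) k ↑S' := by
    intro T hdisj hcl
    have hnot : ∀ x ∈ T, x ∉ closedNbhd (GraphGts t s k) ↑S' := by
      intro x hx hN
      exact (Set.eq_empty_iff_forall_notMem.1 hdisj x) ⟨Finset.mem_coe.2 hx, hN⟩
    refine gts_clique_card hk T ?_ hcl
    rintro (i | ⟨a, b, c⟩) hv
    · by_cases hii : i = i0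
      · exact absurd (Or.inl (by rw [hii]; exact Finset.mem_coe.2 (Finset.mem_insert_self _ _)))
          (hnot _ hv)
      · refine absurd (Or.inr ⟨Sum.inl i0, Finset.mem_coe.2 (Finset.mem_insert_self _ _), ?_⟩)
          (hnot _ hv)
        exact fun hc => hii (hc.symm)
    · by_cases hc : (c : ℕ) = 0
      · have hc' : c = (⟨0, hk⟩ : Fin k) := Fin.ext hc
        by_cases ha : a = i0
        · refine absurd (Or.inr ⟨Sum.inl i0, Finset.mem_coe.2 (Finset.mem_insert_self _ _),
            ⟨ha, hc⟩⟩) (hnot _ hv)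
        · refine absurd (Or.inl ?_) (hnot _ hv)
          rw [Finset.mem_coe, hmemS']
          exact Or.inr ⟨a, b, ha, by rw [hc']⟩
      · exact ⟨a, b, c, rfl, hc⟩
  have hind : IsIndep (GraphGts t s k) ↑S' := by
    intro u hu w hw hne
    rw [Finset.mem_coe, hmemS'] at hu hw
    rcases hu with rfl | ⟨a, b, ha, rfl⟩ <;> rcases hw with rfl | ⟨a', b', ha', rfl⟩
    · exact absurd rfl hne
    · exact fun hadj => ha' hadj.1
    · exact fun hadj => ha hadj.1
    · exact fun hadj => hadj.2.2 rfl
  have hcard : S'.card = s * (t - 1) + 1 := by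
    rw [hS', Finset.card_insert_of_notMem, Finset.card_image_of_injOn, Finset.card_product,
      Finset.card_erase_of_mem (Finset.mem_univ _), Finset.card_univ, Finset.card_univ,
      Fintype.card_fin, Fintype.card_fin]
    · ring
    · intro p hp q hq hpq
      simp only [Sum.inr.injEq, Prod.mk.injEq] at hpq
      exact Prod.ext hpq.1 hpq.2.1
    · rw [Finset.mem_image]
      rintro ⟨p, -, hcontr⟩
      cases hcontr
  have hmem : s * (t - 1) + 1 ∈ {n | ∃ S : Finset (GtsVertex t s k), S.card = n ∧
      IsIsolating (GraphGts t s k) k ↑S ∧ IsIndep (GraphGts t s k) ↑S} :=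
    ⟨S', hcard, hiso, hind⟩
  refine le_antisymm (Nat.sInf_le hmem) ?_
  obtain ⟨S, hcardS, hisoS, hindS⟩ := Nat.sInf_mem ⟨_, hmem⟩
  rw [iota', ← hcardS]
  exact gts_card_lower' ht hs hk S hisoS hindS

lemma gts_free (hr : 3 ≤ s + 2) :
    K1rFree (GraphGts t s k) (s + 2) := by
  classical
  constructor
  intro f
  have hadj : ∀ j : Fin (s + 2),
      (GraphGts t s k).Adj (f (Sum.inl 0)) (f (Sum.inr j)) := by
    intro j
    exact f.map_rel_iff.2 (by simp [completeBipartiteGraph])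
  have hnonadj : ∀ j j' : Fin (s + 2), j ≠ j' →
      ¬ (GraphGts t s k).Adj (f (Sum.inr j)) (f (Sum.inr j')) := by
    intro j j' hne hA
    have := f.map_rel_iff.1 hA
    simp [completeBipartiteGraph] at this
  have hleafinj : ∀ j j' : Fin (s + 2), f (Sum.inr j) = f (Sum.inr j') → j = j' := by
    intro j j' hjj
    have := f.injective hjj
    exact Sum.inr.inj this
  rcases hcen : f (Sum.inl 0) with i | ⟨a, b, c⟩
  · -- center is a clique vertex
    have hFinj : Function.Injective (fun j : Fin (s + 2) =>
        (match f (Sum.inr j) with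
         | Sum.inl _ => (0 : Fin (s + 1))
         | Sum.inr (_, b, _) => b.succ)) := by
      intro j j' hF
      simp only at hF
      by_contra hne
      have hna := hnonadj j j' hne
      have haj := hadj j
      have haj' := hadj j'
      rw [hcen] at haj haj'
      rcases hj : f (Sum.inr j) with u | ⟨a1, b1, c1⟩ <;>
        rcases hj' : f (Sum.inr j') with u' | ⟨a2, b2, c2⟩ <;>
          rw [hj] at haj hna hF <;> rw [hj'] at haj' hna hF
      · -- both inl: distinct hence adjacent, contradiction
        have huu : u ≠ u' := fun hc => hne (hleafinj j j' (by rw [hj, hj', hc]))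
        exact hna huu
      · exact Fin.succ_ne_zero _ hF.symm
      · exact Fin.succ_ne_zero _ hF
      · simp only [Fin.succ_inj] at hF
        obtain ⟨rfl, hc1⟩ := haj
        obtain ⟨rfl, hc2⟩ := haj'
        have hcc : c1 = c2 := Fin.ext (by rw [hc1, hc2])
        exact hne (hleafinj j j' (by rw [hj, hj', hF, hcc]))
    have := Fintype.card_le_of_injective _ hFinj
    simp at this
  · -- center is a copy vertex
    have hFinj : Function.Injective (fun j : Fin (s + 2) =>
        (match f (Sum.inr j) with
         | Sum.inl _ => (0 : Fin 2)
         | Sum.inr _ => 1)) := by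
      intro j j' hF
      simp only at hF
      by_contra hne
      have hna := hnonadj j j' hne
      have haj := hadj j
      have haj' := hadj j'
      rw [hcen] at haj haj'
      rcases hj : f (Sum.inr j) with u | ⟨a1, b1, c1⟩ <;>
        rcases hj' : f (Sum.inr j') with u' | ⟨a2, b2, c2⟩ <;>
          rw [hj] at haj hna hF <;> rw [hj'] at haj' hna hF
      · obtain ⟨hu, -⟩ := haj
        obtain ⟨hu', -⟩ := haj'
        exact hne (hleafinj j j' (by rw [hj, hj', ← hu, ← hu']))
      · simp at hF
      · simp at hF
      · obtain ⟨rfl, rfl, hc1⟩ := haj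
        obtain ⟨rfl, rfl, hc2⟩ := haj'
        by_cases hcc : c1 = c2
        · exact hne (hleafinj j j' (by rw [hj, hj', hcc]))
        · exact hna ⟨rfl, rfl, fun hcon => hcc hcon⟩
    have := Fintype.card_le_of_injective _ hFinj
    simp at this
    omega

end GtsAux

/-- G(t, r − 2) is K_{1,r}-free and attains ι'_k = (r − 2)(ι_k − 1) + 1 = (r − 2)(t − 1) + 1. -/
theorem stmt_15 (t r k : ℕ) (ht : 0 < t) (hr : 3 ≤ r) (hk : 0 < k)
    (h : t + r - 3 ≥ k) :
    K1rFree (GraphGts t (r - 2) k) r ∧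
    iota' (GraphGts t (r - 2) k) k = (r - 2) * (iota (GraphGts t (r - 2) k) k - 1) + 1 ∧
    iota' (GraphGts t (r - 2) k) k = (r - 2) * (t - 1) + 1 := by
  have hs : 0 < r - 2 := by omega
  have hr2 : r - 2 + 2 = r := by omega
  refine ⟨?_, ?_, ?_⟩
  · have := gts_free (t := t) (k := k) (s := r - 2) (by omega)
    rwa [hr2] at this
  · rw [gts_iota_eq ht hs hk, gts_iota'_eq ht hs hk]
  · rw [gts_iota'_eq ht hs hk]
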